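/- arXiv:1803.09086 — 4 statements merged into one kernel-verified Lean document; each statement's English description precedes it below -/
import Mathlib

section
/- There exists a constant β > 0 depending only on α̂ and M̂ such that for every continuously differentiable z : [0,T] → E that is not identically zero, there exist a continuous y : [0,T] → E and ỹ ∈ E with ‖(y,ỹ)‖_Y > 0 and B(z,(y,ỹ)) ≥ β ‖z‖_X ‖(y,ỹ)‖_Y. (This is the inf-sup condition of Theorem 4 for the space-time Nitsche form B_{ε,h}, in its abstract finite-dimensional form; the test pair may be taken as y(t) = A(t)⁻¹(z'(t)) + δ z(t) and ỹ = δ z(0) with δ = α̂⁻⁴M̂⁴, where A(t) : E → E is the linear map with ⟪A(t)w,v⟫ = a(t;w,v).) -/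
open scoped RealInnerProductSpace

/-- The dual norm `N'(v) = sup_{0 ≠ w} ⟪v,w⟫ / N(w)` associated with a norm `N`. -/
noncomputable def dualNorm {E : Type*} [NormedAddCommGroup E] [InnerProductSpace ℝ E]
    (N : E → ℝ) (v : E) : ℝ :=
  ⨆ w : {w : E // w ≠ 0}, ⟪v, (w : E)⟫ / N (w : E)

/-- The norm `‖z‖_X` with `‖z‖_X² = ∫₀ᵀ (N(z(t))² + N'(z'(t))²) dt + ‖z(0)‖²`. -/
noncomputable def normX {E : Type*} [NormedAddCommGroup E] [InnerProductSpace ℝ E]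
    (N : E → ℝ) (T : ℝ) (z : ℝ → E) : ℝ :=
  Real.sqrt ((∫ t in (0:ℝ)..T, (N (z t) ^ 2 + dualNorm N (deriv z t) ^ 2)) + ‖z 0‖ ^ 2)

/-- The norm `‖(y,yE)‖_Y` with `‖(y,yE)‖_Y² = ∫₀ᵀ N(y(t))² dt + ‖yE‖²`. -/
noncomputable def normY {E : Type*} [NormedAddCommGroup E] [InnerProductSpace ℝ E]
    (N : E → ℝ) (T : ℝ) (y : ℝ → E) (yE : E) : ℝ :=
  Real.sqrt ((∫ t in (0:ℝ)..T, N (y t) ^ 2) + ‖yE‖ ^ 2)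

/-- The space-time form `B(z,(y,yE)) = ∫₀ᵀ (⟪z'(t),y(t)⟫ + a(t;z(t),y(t))) dt + ⟪z(0),yE⟫`. -/
noncomputable def Bform {E : Type*} [NormedAddCommGroup E] [InnerProductSpace ℝ E]
    (a : ℝ → E →ₗ[ℝ] E →ₗ[ℝ] ℝ) (T : ℝ) (z y : ℝ → E) (yE : E) : ℝ :=
  (∫ t in (0:ℝ)..T, (⟪deriv z t, y t⟫ + a t (z t) (y t))) + ⟪z 0, yE⟫


set_option linter.unusedSectionVars false
set_option linter.unusedVariables false
set_option maxHeartbeats 1000000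


section AuxNorm
variable {E : Type*} [NormedAddCommGroup E] [InnerProductSpace ℝ E]

theorem aux_N_zero (N : E → ℝ) (hN0 : ∀ x, N x = 0 ↔ x = 0) : N 0 = 0 := (hN0 0).mpr rfl

theorem aux_N_neg (N : E → ℝ) (hNsmul : ∀ (c : ℝ) (x : E), N (c • x) = |c| * N x) (x : E) :
    N (-x) = N x := by
  simpa using hNsmul (-1) x

theorem aux_N_nonneg (N : E → ℝ) (hN0 : ∀ x, N x = 0 ↔ x = 0)
    (hNsmul : ∀ (c : ℝ) (x : E), N (c • x) = |c| * N x)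
    (hNtri : ∀ x y : E, N (x + y) ≤ N x + N y) (x : E) : 0 ≤ N x := by
  have h := hNtri x (-x)
  rw [add_neg_cancel, aux_N_zero N hN0, aux_N_neg N hNsmul] at h
  linarith

theorem aux_N_sum (N : E → ℝ) (hN0 : ∀ x, N x = 0 ↔ x = 0)
    (hNtri : ∀ x y : E, N (x + y) ≤ N x + N y)
    {ι : Type*} (s : Finset ι) (g : ι → E) :
    N (∑ i ∈ s, g i) ≤ ∑ i ∈ s, N (g i) := by
  classical
  induction s using Finset.induction with
  | empty => simp [aux_N_zero N hN0]
  | insert _ _ hx ih =>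
      rw [Finset.sum_insert hx, Finset.sum_insert hx]
      exact (hNtri _ _).trans (by linarith)

theorem aux_norm_upper [FiniteDimensional ℝ E] (N : E → ℝ)
    (hN0 : ∀ x, N x = 0 ↔ x = 0)
    (hNsmul : ∀ (c : ℝ) (x : E), N (c • x) = |c| * N x)
    (hNtri : ∀ x y : E, N (x + y) ≤ N x + N y) :
    ∃ c₂ > 0, ∀ v : E, N v ≤ c₂ * ‖v‖ := by
  classical
  set b := Module.finBasis ℝ E
  set L : E →L[ℝ] (Fin (Module.finrank ℝ E) → ℝ) :=
    LinearMap.toContinuousLinearMap (b.equivFun : E →ₗ[ℝ] _)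
  have hNb : ∀ i, 0 ≤ N (b i) := fun i => aux_N_nonneg N hN0 hNsmul hNtri _
  have hnn : 0 ≤ ‖L‖ * (∑ i, N (b i)) := by
    apply mul_nonneg (norm_nonneg _) (Finset.sum_nonneg fun i _ => hNb i)
  refine ⟨‖L‖ * (∑ i, N (b i)) + 1, by linarith, fun v => ?_⟩
  have h1 : N v ≤ ∑ i, N (b.equivFun v i • b i) := by
    conv_lhs => rw [← b.sum_equivFun v]
    exact aux_N_sum N hN0 hNtri _ _
  have h2 : ∀ i, N (b.equivFun v i • b i) ≤ ‖L‖ * ‖v‖ * N (b i) := by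
    intro i
    rw [hNsmul]
    have hcoord : |b.equivFun v i| ≤ ‖L‖ * ‖v‖ := by
      have := norm_le_pi_norm (L v) i
      simpa [L] using this.trans (L.le_opNorm v)
    exact mul_le_mul_of_nonneg_right hcoord (hNb i)
  calc N v ≤ ∑ i, N (b.equivFun v i • b i) := h1
    _ ≤ ∑ i, ‖L‖ * ‖v‖ * N (b i) := Finset.sum_le_sum fun i _ => h2 i
    _ = ‖L‖ * (∑ i, N (b i)) * ‖v‖ := by rw [Finset.mul_sum, Finset.sum_mul]; exact Finset.sum_congr rfl fun i _ => by ring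
    _ ≤ (‖L‖ * (∑ i, N (b i)) + 1) * ‖v‖ := by nlinarith [norm_nonneg v]

end AuxNorm

section Aux2
variable {E : Type*} [NormedAddCommGroup E] [InnerProductSpace ℝ E]

theorem aux_N_cont (N : E → ℝ)
    (hNsmul : ∀ (c : ℝ) (x : E), N (c • x) = |c| * N x)
    (hNtri : ∀ x y : E, N (x + y) ≤ N x + N y)
    {c₂ : ℝ} (hub : ∀ v : E, N v ≤ c₂ * ‖v‖) : Continuous N := by
  have key : ∀ x y : E, N x - N y ≤ c₂ * ‖x - y‖ := by
    intro x y
    have h := hNtri y (x - y)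
    rw [add_sub_cancel] at h
    have := hub (x - y)
    linarith
  rw [Metric.continuous_iff]
  intro x ε hε
  rcases le_or_gt c₂ 0 with hc | hc
  · refine ⟨1, one_pos, fun y _ => ?_⟩
    have h1 := key y x
    have h2 := key x y
    have h3 : 0 ≤ c₂ * ‖y - x‖ → c₂ * ‖y - x‖ = 0 ∨ True := fun _ => Or.inr trivial
    have hn : c₂ * ‖y - x‖ ≤ 0 := mul_nonpos_of_nonpos_of_nonneg hc (norm_nonneg _)
    have hn2 : c₂ * ‖x - y‖ ≤ 0 := mul_nonpos_of_nonpos_of_nonneg hc (norm_nonneg _)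
    have : |N y - N x| ≤ 0 := abs_le.mpr ⟨by linarith, by linarith⟩
    rw [Real.dist_eq]
    linarith [hε]
  · refine ⟨ε / c₂, by positivity, fun y hy => ?_⟩
    rw [Real.dist_eq]
    rw [dist_eq_norm] at hy
    have h1 := key y x
    have h2 := key x y
    have hxy : ‖x - y‖ = ‖y - x‖ := norm_sub_rev x y
    rw [hxy] at h2
    have : c₂ * ‖y - x‖ < ε := by
      have := (mul_lt_mul_iff_right₀ hc).mpr hy
      calc c₂ * ‖y - x‖ < c₂ * (ε / c₂) := this
        _ = ε := by field_simp
    refine abs_lt.mpr ⟨by linarith, by linarith⟩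

theorem aux_norm_lower [FiniteDimensional ℝ E] [Nontrivial E] (N : E → ℝ)
    (hN0 : ∀ x, N x = 0 ↔ x = 0)
    (hNsmul : ∀ (c : ℝ) (x : E), N (c • x) = |c| * N x)
    (hNtri : ∀ x y : E, N (x + y) ≤ N x + N y)
    (hNcont : Continuous N) :
    ∃ c₁ > 0, ∀ v : E, c₁ * ‖v‖ ≤ N v := by
  have hsph : (Metric.sphere (0:E) 1).Nonempty := NormedSpace.sphere_nonempty.mpr zero_le_one
  have hcpt : IsCompact (Metric.sphere (0:E) 1) := isCompact_sphere 0 1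
  obtain ⟨m, hm, hmin'⟩ := hcpt.exists_isMinOn hsph hNcont.continuousOn
  have hmin : ∀ w ∈ Metric.sphere (0:E) 1, N m ≤ N w := fun w hw => hmin' hw
  have hm1 : ‖m‖ = 1 := mem_sphere_zero_iff_norm.mp hm
  have hmne : m ≠ 0 := by intro h; rw [h, norm_zero] at hm1; norm_num at hm1
  have hnn : 0 ≤ N m := by
    have h1 := hNsmul (-1) m
    have h0 : N ((-1:ℝ) • m + m) = 0 := by
      norm_num
      exact (hN0 0).mpr rfl
    nlinarith [hNtri ((-1:ℝ) • m) m, abs_of_nonpos (show (-1:ℝ) ≤ 0 by norm_num)]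
  have hc1 : 0 < N m := by
    rcases lt_or_eq_of_le hnn with h | h
    · exact h
    · exact absurd ((hN0 m).mp h.symm) hmne
  refine ⟨N m, hc1, fun v => ?_⟩
  rcases eq_or_ne v 0 with rfl | hv
  · simp [(hN0 (0:E)).mpr rfl]
  · have hvn : ‖v‖ ≠ 0 := norm_ne_zero_iff.mpr hv
    have hmem : (‖v‖⁻¹ • v) ∈ Metric.sphere (0:E) 1 := by
      simp [norm_smul, abs_of_nonneg (inv_nonneg.mpr (norm_nonneg v)), inv_mul_cancel₀ hvn]
    have := hmin _ hmem
    rw [hNsmul, abs_of_nonneg (inv_nonneg.mpr (norm_nonneg v))] at this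
    have hvpos : (0:ℝ) < ‖v‖ := lt_of_le_of_ne (norm_nonneg v) (Ne.symm hvn)
    calc N m * ‖v‖ ≤ (‖v‖⁻¹ * N v) * ‖v‖ := mul_le_mul_of_nonneg_right this (norm_nonneg v)
      _ = N v := by field_simp

end Aux2

section Aux3
variable {E : Type*} [NormedAddCommGroup E] [InnerProductSpace ℝ E] [Nontrivial E]

theorem aux_ne_nonempty : Nonempty {w : E // w ≠ 0} := ⟨⟨Classical.choose (exists_ne (0:E)),
  Classical.choose_spec (exists_ne (0:E))⟩⟩

variable (N : E → ℝ) {c₁ : ℝ} (hc₁ : 0 < c₁) (hlb : ∀ v : E, c₁ * ‖v‖ ≤ N v)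

include hc₁ hlb in
theorem aux_dual_term_le (v : E) (w : {w : E // w ≠ 0}) :
    ⟪v, (w : E)⟫ / N (w : E) ≤ (1 / c₁) * ‖v‖ := by
  have hwpos : (0:ℝ) < ‖(w : E)‖ := norm_pos_iff.mpr w.2
  have hNw : 0 < N (w : E) := lt_of_lt_of_le (mul_pos hc₁ (norm_pos_iff.mpr w.2)) (hlb w)
  have h1 : ⟪v, (w : E)⟫ ≤ ‖v‖ * ‖(w : E)‖ := real_inner_le_norm v w
  rw [div_le_iff₀ hNw]
  calc ⟪v, (w : E)⟫ ≤ ‖v‖ * ‖(w : E)‖ := h1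
    _ = (1 / c₁) * ‖v‖ * (c₁ * ‖(w : E)‖) := by field_simp
    _ ≤ (1 / c₁) * ‖v‖ * N (w : E) := by
        apply mul_le_mul_of_nonneg_left (hlb w) (by positivity)

include hc₁ hlb in
theorem aux_dual_bdd (v : E) :
    BddAbove (Set.range fun w : {w : E // w ≠ 0} => ⟪v, (w : E)⟫ / N (w : E)) :=
  ⟨(1 / c₁) * ‖v‖, by rintro x ⟨w, rfl⟩; exact aux_dual_term_le N hc₁ hlb v w⟩

include hc₁ hlb in
theorem aux_dual_le (v : E) : dualNorm N v ≤ (1 / c₁) * ‖v‖ := by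
  have := aux_ne_nonempty (E := E)
  exact ciSup_le fun w => aux_dual_term_le N hc₁ hlb v w

include hc₁ hlb in
theorem aux_dual_nonneg (v : E) : 0 ≤ dualNorm N v := by
  obtain ⟨w, hw⟩ := exists_ne (0:E)
  rcases le_or_gt 0 ⟪v, w⟫ with h | h
  · refine le_trans ?_ (le_ciSup (aux_dual_bdd N hc₁ hlb v) ⟨w, hw⟩)
    have hNw : 0 < N w := lt_of_lt_of_le (mul_pos hc₁ (norm_pos_iff.mpr hw)) (hlb w)
    exact div_nonneg h hNw.le
  · have hw' : (-w) ≠ 0 := neg_ne_zero.mpr hw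
    refine le_trans ?_ (le_ciSup (aux_dual_bdd N hc₁ hlb v) ⟨-w, hw'⟩)
    have hNw : 0 < N (-w) := lt_of_lt_of_le (mul_pos hc₁ (norm_pos_iff.mpr hw')) (hlb (-w))
    have h2 : ⟪v, -w⟫ = -⟪v, w⟫ := inner_neg_right v w
    rw [h2]
    exact div_nonneg (by linarith) hNw.le

include hc₁ hlb in
theorem aux_dual_ge {c₂ : ℝ} (hc₂ : 0 < c₂) (hub : ∀ v : E, N v ≤ c₂ * ‖v‖) (v : E) :
    ‖v‖ ≤ c₂ * dualNorm N v := by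
  rcases eq_or_ne v 0 with rfl | hv
  · simp [mul_nonneg hc₂.le (aux_dual_nonneg N hc₁ hlb 0)]
  · have hNv : 0 < N v := lt_of_lt_of_le (mul_pos hc₁ (norm_pos_iff.mpr hv)) (hlb v)
    have hterm : ‖v‖ / c₂ ≤ ⟪v, v⟫ / N v := by
      rw [real_inner_self_eq_norm_sq]
      rw [div_le_div_iff₀ hc₂ hNv]
      have h1 : N v * ‖v‖ ≤ c₂ * ‖v‖ * ‖v‖ :=
        mul_le_mul_of_nonneg_right (hub v) (norm_nonneg v)
      calc ‖v‖ * N v = N v * ‖v‖ := by ring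
        _ ≤ c₂ * ‖v‖ * ‖v‖ := h1
        _ = ‖v‖ ^ 2 * c₂ := by ring
    have := hterm.trans (le_ciSup (aux_dual_bdd N hc₁ hlb v) ⟨v, hv⟩)
    calc ‖v‖ = c₂ * (‖v‖ / c₂) := by field_simp
      _ ≤ c₂ * dualNorm N v := mul_le_mul_of_nonneg_left this hc₂.le

include hc₁ hlb in
theorem aux_dual_tri (x y : E) : dualNorm N (x + y) ≤ dualNorm N x + dualNorm N y := by
  have := aux_ne_nonempty (E := E)
  refine ciSup_le fun w => ?_
  have h : ⟪x + y, (w : E)⟫ / N (w : E) = ⟪x, (w : E)⟫ / N (w : E) + ⟪y, (w : E)⟫ / N (w : E) := by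
    rw [inner_add_left, add_div]
  rw [h]
  exact add_le_add (le_ciSup (aux_dual_bdd N hc₁ hlb x) w)
    (le_ciSup (aux_dual_bdd N hc₁ hlb y) w)

include hc₁ hlb in
theorem aux_dual_cont : Continuous (dualNorm N) := by
  rw [Metric.continuous_iff]
  intro x ε hε
  refine ⟨c₁ * ε, by positivity, fun y hy => ?_⟩
  have key : ∀ u v : E, dualNorm N u - dualNorm N v ≤ (1 / c₁) * ‖u - v‖ := by
    intro u v
    have h := aux_dual_tri N hc₁ hlb v (u - v)
    rw [add_sub_cancel] at h
    have := aux_dual_le N hc₁ hlb (u - v)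
    linarith
  have h1 := key y x
  have h2 := key x y
  rw [norm_sub_rev] at h2
  rw [dist_eq_norm] at hy
  have hb : (1 / c₁) * ‖y - x‖ < ε := by
    rw [div_mul_eq_mul_div, one_mul, div_lt_iff₀ hc₁]
    linarith
  rw [Real.dist_eq]
  exact abs_lt.mpr ⟨by linarith, by linarith⟩

end Aux3

section Aux4
variable {E : Type*} [NormedAddCommGroup E] [InnerProductSpace ℝ E]

theorem aux_cont_a [FiniteDimensional ℝ E] (a : ℝ → E →ₗ[ℝ] E →ₗ[ℝ] ℝ) {s : Set ℝ}
    (ha : ∀ w v : E, ContinuousOn (fun t => a t w v) s) {f g : ℝ → E}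
    (hf : ContinuousOn f s) (hg : ContinuousOn g s) :
    ContinuousOn (fun t => a t (f t) (g t)) s := by
  classical
  set b := Module.finBasis ℝ E with hb
  have key : ∀ t, a t (f t) (g t) =
      ∑ i, ∑ j, b.equivFun (f t) i * (b.equivFun (g t) j * a t (b i) (b j)) := by
    intro t
    conv_lhs => rw [← b.sum_equivFun (f t), ← b.sum_equivFun (g t)]
    rw [map_sum]
    simp only [LinearMap.coe_sum, Finset.sum_apply, map_smul, LinearMap.smul_apply,
      smul_eq_mul, map_sum, Finset.mul_sum]
    rw [Finset.sum_comm]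
    exact Finset.sum_congr rfl fun i _ => Finset.sum_congr rfl fun j _ => by ring
  have hcoord : Continuous (fun x : E => b.equivFun x) :=
    LinearMap.continuous_of_finiteDimensional (b.equivFun : E →ₗ[ℝ] (Fin (Module.finrank ℝ E) → ℝ))
  have hcoord' : ∀ i, Continuous (fun x : E => b.equivFun x i) := fun i =>
    (continuous_apply i).comp hcoord
  have : ContinuousOn (fun t =>
      ∑ i, ∑ j, b.equivFun (f t) i * (b.equivFun (g t) j * a t (b i) (b j))) s := by
    apply continuousOn_finset_sum
    intro i _
    apply continuousOn_finset_sum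
    intro j _
    exact (((hcoord' i).comp_continuousOn hf)).mul
      (((hcoord' j).comp_continuousOn hg).mul (ha (b i) (b j)))
  exact this.congr fun t _ => key t

theorem aux_int_pos {f : ℝ → ℝ} {T t₀ : ℝ} (hT : 0 < T)
    (hf : ContinuousOn f (Set.Icc 0 T)) (h0 : ∀ t ∈ Set.Icc (0:ℝ) T, 0 ≤ f t)
    (ht₀ : t₀ ∈ Set.Icc (0:ℝ) T) (hpos : 0 < f t₀) : 0 < ∫ t in (0:ℝ)..T, f t := by
  obtain ⟨ht₀0, ht₀T⟩ := ht₀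
  have hcw := hf t₀ ⟨ht₀0, ht₀T⟩
  rw [ContinuousWithinAt, Metric.tendsto_nhdsWithin_nhds] at hcw
  obtain ⟨δ, hδ, hball⟩ := hcw (f t₀ / 2) (by linarith)
  set c := max 0 (t₀ - δ/2) with hc
  set d := min T (t₀ + δ/2) with hd
  have hc0 : 0 ≤ c := le_max_left _ _
  have hdT : d ≤ T := min_le_left _ _
  have hcd : c < d := by
    rw [hc, hd]
    apply max_lt <;> apply lt_min <;> linarith
  have hsub : Set.Icc c d ⊆ Set.Icc 0 T := Set.Icc_subset_Icc hc0 hdT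
  have hlow : ∀ s ∈ Set.Icc c d, f t₀ / 2 ≤ f s := by
    intro s hs
    have hs1 := hs.1
    have hs2 := hs.2
    have h1 : t₀ - δ/2 ≤ s := le_trans (le_max_right _ _) hs1
    have h2 : s ≤ t₀ + δ/2 := le_trans hs2 (min_le_right _ _)
    have hdist : dist s t₀ < δ := by
      rw [Real.dist_eq, abs_lt]; constructor <;> linarith
    have := hball (hsub hs) hdist
    rw [Real.dist_eq, abs_lt] at this
    linarith [this.1, this.2]
  have hint : IntervalIntegrable f MeasureTheory.volume 0 T :=
    ContinuousOn.intervalIntegrable (by rwa [Set.uIcc_of_le hT.le])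
  have hint1 : IntervalIntegrable f MeasureTheory.volume 0 c :=
    hint.mono_set (by rw [Set.uIcc_of_le hc0, Set.uIcc_of_le hT.le]
                      exact Set.Icc_subset_Icc le_rfl (le_trans hcd.le hdT))
  have hint2 : IntervalIntegrable f MeasureTheory.volume c d :=
    hint.mono_set (by rw [Set.uIcc_of_le hcd.le, Set.uIcc_of_le hT.le]; exact hsub)
  have hint3 : IntervalIntegrable f MeasureTheory.volume d T :=
    hint.mono_set (by rw [Set.uIcc_of_le hdT, Set.uIcc_of_le hT.le]
                      exact Set.Icc_subset_Icc (le_trans hc0 hcd.le) le_rfl)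
  have hsplit : (∫ t in (0:ℝ)..T, f t) =
      (∫ t in (0:ℝ)..c, f t) + (∫ t in c..d, f t) + (∫ t in d..T, f t) := by
    rw [intervalIntegral.integral_add_adjacent_intervals hint1 hint2,
      intervalIntegral.integral_add_adjacent_intervals (hint1.trans hint2) hint3]
  have hmid : (d - c) * (f t₀ / 2) ≤ ∫ t in c..d, f t := by
    have hconst : (∫ _ in c..d, f t₀ / 2) = (d - c) * (f t₀ / 2) := by
      rw [intervalIntegral.integral_const]; simp [smul_eq_mul]
    rw [← hconst]
    exact intervalIntegral.integral_mono_on hcd.le intervalIntegrable_const hint2 hlow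
  have h1 : 0 ≤ ∫ t in (0:ℝ)..c, f t :=
    intervalIntegral.integral_nonneg hc0 fun u hu =>
      h0 u ⟨hu.1, le_trans hu.2 (le_trans hcd.le hdT)⟩
  have h3 : 0 ≤ ∫ t in d..T, f t :=
    intervalIntegral.integral_nonneg hdT fun u hu =>
      h0 u ⟨le_trans hc0 (le_trans hcd.le hu.1), hu.2⟩
  have hmidpos : 0 < (d - c) * (f t₀ / 2) := by
    apply mul_pos <;> linarith
  rw [hsplit]
  linarith
end Aux4

section Aux5
variable {E : Type*} [NormedAddCommGroup E] [InnerProductSpace ℝ E]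

theorem aux_ftc (z : ℝ → E) (hz : ContDiff ℝ 1 z) {T : ℝ} (hT : 0 ≤ T) :
    (∫ t in (0:ℝ)..T, ⟪deriv z t, z t⟫) = ‖z T‖ ^ 2 / 2 - ‖z 0‖ ^ 2 / 2 := by
  have hdiff : ∀ t : ℝ, HasDerivAt z (deriv z t) t := fun t =>
    (hz.differentiable one_ne_zero t).hasDerivAt
  have hderivcont : Continuous (deriv z) := hz.continuous_deriv le_rfl
  have hzc : Continuous z := hz.continuous
  have hF : ∀ t : ℝ, HasDerivAt (fun t => ⟪z t, z t⟫)
      (⟪z t, deriv z t⟫ + ⟪deriv z t, z t⟫) t := fun t =>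
    (hdiff t).inner ℝ (hdiff t)
  have hicont : Continuous fun t => ⟪z t, deriv z t⟫ + ⟪deriv z t, z t⟫ := by
    exact (hzc.inner hderivcont).add (hderivcont.inner hzc)
  have hint : IntervalIntegrable (fun t => ⟪z t, deriv z t⟫ + ⟪deriv z t, z t⟫)
      MeasureTheory.volume 0 T := hicont.intervalIntegrable 0 T
  have key := intervalIntegral.integral_eq_sub_of_hasDerivAt (f := fun t => ⟪z t, z t⟫)
    (fun t _ => hF t) hint
  have hcomm : (∫ t in (0:ℝ)..T, (⟪z t, deriv z t⟫ + ⟪deriv z t, z t⟫)) =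
      ∫ t in (0:ℝ)..T, (2 : ℝ) * ⟪deriv z t, z t⟫ := by
    apply intervalIntegral.integral_congr
    intro t _
    show ⟪z t, deriv z t⟫ + ⟪deriv z t, z t⟫ = 2 * ⟪deriv z t, z t⟫
    rw [real_inner_comm (z t) (deriv z t)]
    ring
  rw [hcomm, intervalIntegral.integral_const_mul] at key
  have key2 : 2 * (∫ t in (0:ℝ)..T, ⟪deriv z t, z t⟫) = ⟪z T, z T⟫ - ⟪z 0, z 0⟫ := key
  rw [real_inner_self_eq_norm_sq, real_inner_self_eq_norm_sq] at key2
  linarith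
end Aux5

/-- Theorem 4 (inf-sup condition of `B_{ε,h}`), abstract form: there is `β > 0` such that for
every continuously differentiable `z` not identically zero on `[0,T]` there is a test pair
`(y,ỹ)` with `‖(y,ỹ)‖_Y > 0` and `B(z,(y,ỹ)) ≥ β ‖z‖_X ‖(y,ỹ)‖_Y`. -/
theorem Bform_infSup
    {E : Type*} [NormedAddCommGroup E] [InnerProductSpace ℝ E]
    [FiniteDimensional ℝ E] [Nontrivial E]
    (N : E → ℝ)
    (hN0 : ∀ x, N x = 0 ↔ x = 0)
    (hNsmul : ∀ (c : ℝ) (x : E), N (c • x) = |c| * N x)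
    (hNtri : ∀ x y : E, N (x + y) ≤ N x + N y)
    (T : ℝ) (hT : 0 < T)
    (a : ℝ → E →ₗ[ℝ] E →ₗ[ℝ] ℝ)
    (ha_cont : ∀ w v : E, ContinuousOn (fun t => a t w v) (Set.Icc 0 T))
    (αh Mh : ℝ) (hα : 0 < αh) (hM : 0 < Mh)
    (hcoer : ∀ t ∈ Set.Icc (0:ℝ) T, ∀ v : E, αh * N v ^ 2 ≤ a t v v)
    (hcont : ∀ t ∈ Set.Icc (0:ℝ) T, ∀ w v : E, a t w v ≤ Mh * N w * N v) :
    ∃ β > 0, ∀ z : ℝ → E, ContDiff ℝ 1 z → (∃ t ∈ Set.Icc (0:ℝ) T, z t ≠ 0) →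
      ∃ y : ℝ → E, ContinuousOn y (Set.Icc 0 T) ∧ ∃ yE : E,
        0 < normY N T y yE ∧ β * normX N T z * normY N T y yE ≤ Bform a T z y yE := by
  classical
  obtain ⟨c₂, hc₂, hub⟩ := aux_norm_upper N hN0 hNsmul hNtri
  have hNcont : Continuous N := aux_N_cont N hNsmul hNtri hub
  obtain ⟨c₁, hc₁, hlb⟩ := aux_norm_lower N hN0 hNsmul hNtri hNcont
  have hNnonneg : ∀ x : E, 0 ≤ N x := aux_N_nonneg N hN0 hNsmul hNtri
  set δ : ℝ := Mh ^ 2 * c₂ ^ 2 / αh with hδdef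
  have hδ : 0 < δ := by positivity
  set c : ℝ := min (1/2) (min (Mh ^ 2 * c₂ ^ 2 / 2) (δ / 2)) with hcdef
  have hc : 0 < c := lt_min (by norm_num) (lt_min (by positivity) (by positivity))
  set C1 : ℝ := max (1 / c₁ ^ 2) 1 with hC1def
  have hC1 : 0 < C1 := lt_of_lt_of_le one_pos (le_max_right _ _)
  set C2 : ℝ := max (2 * c₂ ^ 2) (2 * δ ^ 2) with hC2def
  have hC2 : 0 < C2 := lt_of_lt_of_le (by positivity) (le_max_left _ _)
  have hsqrtC : 0 < Real.sqrt (C1 * C2) := Real.sqrt_pos.mpr (by positivity)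
  refine ⟨c / Real.sqrt (C1 * C2), by positivity, ?_⟩
  rintro z hz ⟨t₀, ht₀, hzt₀⟩
  have hzc : Continuous z := hz.continuous
  have hz' : Continuous (deriv z) := hz.continuous_deriv le_rfl
  have hdiff : ∀ t : ℝ, HasDerivAt z (deriv z t) t := fun t =>
    (hz.differentiable one_ne_zero t).hasDerivAt
  set y : ℝ → E := fun t => deriv z t + δ • z t with hydef
  have hyc : Continuous y := hz'.add (hzc.const_smul δ)
  have huIcc : Set.uIcc (0:ℝ) T = Set.Icc 0 T := Set.uIcc_of_le hT.le
  set I1 : ℝ := ∫ t in (0:ℝ)..T, ‖deriv z t‖ ^ 2 with hI1def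
  set I2 : ℝ := ∫ t in (0:ℝ)..T, N (z t) ^ 2 with hI2def
  set K : ℝ := ‖z 0‖ ^ 2 with hKdef
  -- continuity of all integrands
  have hcg1 : Continuous fun t => ‖deriv z t‖ ^ 2 := (hz'.norm.pow 2)
  have hcg2 : Continuous fun t => N (z t) ^ 2 := ((hNcont.comp hzc).pow 2)
  have hcgd : Continuous fun t => dualNorm N (deriv z t) ^ 2 :=
    (((aux_dual_cont N hc₁ hlb).comp hz').pow 2)
  have hcga1 : ContinuousOn (fun t => a t (z t) (deriv z t)) (Set.Icc 0 T) :=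
    aux_cont_a a ha_cont hzc.continuousOn hz'.continuousOn
  have hcga2 : ContinuousOn (fun t => a t (z t) (z t)) (Set.Icc 0 T) :=
    aux_cont_a a ha_cont hzc.continuousOn hzc.continuousOn
  have hcgh : ContinuousOn
      (fun t => ⟪deriv z t, deriv z t⟫ + a t (z t) (deriv z t) + δ * a t (z t) (z t))
      (Set.Icc 0 T) :=
    (((hz'.inner hz').continuousOn.add hcga1).add (continuousOn_const.mul hcga2))
  have hcgy : Continuous fun t => N (y t) ^ 2 := ((hNcont.comp hyc).pow 2)
  -- integrability
  have hint1 : IntervalIntegrable (fun t => ‖deriv z t‖ ^ 2) MeasureTheory.volume 0 T :=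
    hcg1.intervalIntegrable 0 T
  have hint2 : IntervalIntegrable (fun t => N (z t) ^ 2) MeasureTheory.volume 0 T :=
    hcg2.intervalIntegrable 0 T
  have hintd : IntervalIntegrable (fun t => dualNorm N (deriv z t) ^ 2)
      MeasureTheory.volume 0 T := hcgd.intervalIntegrable 0 T
  have hinth : IntervalIntegrable
      (fun t => ⟪deriv z t, deriv z t⟫ + a t (z t) (deriv z t) + δ * a t (z t) (z t))
      MeasureTheory.volume 0 T :=
    ContinuousOn.intervalIntegrable (by rw [huIcc]; exact hcgh)
  have hintzz : IntervalIntegrable (fun t => ⟪deriv z t, z t⟫) MeasureTheory.volume 0 T :=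
    (hz'.inner hzc).intervalIntegrable 0 T
  have hinty : IntervalIntegrable (fun t => N (y t) ^ 2) MeasureTheory.volume 0 T :=
    hcgy.intervalIntegrable 0 T
  -- nonnegativity
  have hI1nonneg : 0 ≤ I1 :=
    intervalIntegral.integral_nonneg hT.le fun u _ => sq_nonneg _
  have hI2nonneg : 0 ≤ I2 :=
    intervalIntegral.integral_nonneg hT.le fun u _ => sq_nonneg _
  have hKnonneg : 0 ≤ K := sq_nonneg _
  have hI2pos : 0 < I2 := by
    refine aux_int_pos hT hcg2.continuousOn (fun t _ => sq_nonneg _) ht₀ ?_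
    have : 0 < N (z t₀) := lt_of_le_of_ne (hNnonneg _) fun h => hzt₀ ((hN0 _).mp h.symm)
    positivity
  set S : ℝ := I1 + I2 + K with hSdef
  have hS : 0 < S := by positivity
  -- lower bound on B
  have hBeq : Bform a T z y (δ • z 0) =
      (∫ t in (0:ℝ)..T,
        (⟪deriv z t, deriv z t⟫ + a t (z t) (deriv z t) + δ * a t (z t) (z t)))
      + δ * (‖z T‖ ^ 2 / 2 - ‖z 0‖ ^ 2 / 2) + δ * K := by
    rw [Bform]
    have hinteq : ∀ t ∈ Set.uIcc (0:ℝ) T,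
        ⟪deriv z t, y t⟫ + a t (z t) (y t) =
        (⟪deriv z t, deriv z t⟫ + a t (z t) (deriv z t) + δ * a t (z t) (z t))
          + δ * ⟪deriv z t, z t⟫ := by
      intro t _
      show ⟪deriv z t, deriv z t + δ • z t⟫ + a t (z t) (deriv z t + δ • z t) = _
      rw [inner_add_right, real_inner_smul_right, map_add, map_smul, smul_eq_mul]
      ring
    rw [intervalIntegral.integral_congr hinteq,
      intervalIntegral.integral_add hinth (hintzz.const_mul δ),
      intervalIntegral.integral_const_mul, aux_ftc z hz hT.le]
    have : ⟪z 0, δ • z 0⟫ = δ * K := by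
      rw [real_inner_smul_right, real_inner_self_eq_norm_sq]
    rw [this]
  have hghlow : ∀ t ∈ Set.Icc (0:ℝ) T,
      1/2 * ‖deriv z t‖ ^ 2 + Mh ^ 2 * c₂ ^ 2 / 2 * N (z t) ^ 2 ≤
      ⟪deriv z t, deriv z t⟫ + a t (z t) (deriv z t) + δ * a t (z t) (z t) := by
    intro t ht
    have h1 := hcont t ht (z t) (-(deriv z t))
    rw [map_neg, aux_N_neg N hNsmul] at h1
    have e0 : -(a t (z t) (deriv z t)) ≤ Mh * N (z t) * N (deriv z t) := h1
    have h2 := hcoer t ht (z t)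
    have h3 := hub (deriv z t)
    have h4 : ⟪deriv z t, deriv z t⟫ = ‖deriv z t‖ ^ 2 :=
      real_inner_self_eq_norm_sq (deriv z t)
    have e1 : Mh * N (z t) * N (deriv z t) ≤ Mh * N (z t) * (c₂ * ‖deriv z t‖) :=
      mul_le_mul_of_nonneg_left h3 (mul_nonneg hM.le (hNnonneg _))
    have e2 : Mh * N (z t) * (c₂ * ‖deriv z t‖) ≤
        1/2 * ‖deriv z t‖ ^ 2 + Mh ^ 2 * c₂ ^ 2 / 2 * N (z t) ^ 2 := by
      nlinarith [sq_nonneg (Mh * c₂ * N (z t) - ‖deriv z t‖)]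
    have e3 : δ * (αh * N (z t) ^ 2) ≤ δ * a t (z t) (z t) :=
      mul_le_mul_of_nonneg_left h2 hδ.le
    have e4 : δ * αh = Mh ^ 2 * c₂ ^ 2 := by
      rw [hδdef]; field_simp
    have e5 : δ * (αh * N (z t) ^ 2) = Mh ^ 2 * c₂ ^ 2 * N (z t) ^ 2 := by
      rw [← e4]; ring
    rw [h4]
    linarith
  have hintrhs1 : IntervalIntegrable
      (fun t => 1/2 * ‖deriv z t‖ ^ 2 + Mh ^ 2 * c₂ ^ 2 / 2 * N (z t) ^ 2)
      MeasureTheory.volume 0 T :=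
    ((continuous_const.mul hcg1).add (continuous_const.mul hcg2)).intervalIntegrable 0 T
  have hmono1 : 1/2 * I1 + Mh ^ 2 * c₂ ^ 2 / 2 * I2 ≤
      ∫ t in (0:ℝ)..T,
        (⟪deriv z t, deriv z t⟫ + a t (z t) (deriv z t) + δ * a t (z t) (z t)) := by
    have := intervalIntegral.integral_mono_on hT.le hintrhs1 hinth hghlow
    rwa [intervalIntegral.integral_add ((hint1.const_mul _)) ((hint2.const_mul _)),
      intervalIntegral.integral_const_mul, intervalIntegral.integral_const_mul] at this
  have hBlow : c * S ≤ Bform a T z y (δ • z 0) := by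
    rw [hBeq]
    have hzT : 0 ≤ δ * (‖z T‖ ^ 2 / 2) := by positivity
    have hc1' : c ≤ 1/2 := min_le_left _ _
    have hc2' : c ≤ Mh ^ 2 * c₂ ^ 2 / 2 := le_trans (min_le_right _ _) (min_le_left _ _)
    have hc3' : c ≤ δ / 2 := le_trans (min_le_right _ _) (min_le_right _ _)
    have m1 : c * I1 ≤ 1/2 * I1 := mul_le_mul_of_nonneg_right hc1' hI1nonneg
    have m2 : c * I2 ≤ Mh ^ 2 * c₂ ^ 2 / 2 * I2 := mul_le_mul_of_nonneg_right hc2' hI2nonneg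
    have m3 : c * K ≤ δ / 2 * K := mul_le_mul_of_nonneg_right hc3' hKnonneg
    have hSexp : c * S = c * I1 + c * I2 + c * K := by rw [hSdef]; ring
    rw [hSexp]
    nlinarith [hmono1]
  -- upper bound on normX²
  have hA1 : (∫ t in (0:ℝ)..T, (N (z t) ^ 2 + dualNorm N (deriv z t) ^ 2)) + K ≤ C1 * S := by
    have hpt : ∀ t ∈ Set.Icc (0:ℝ) T,
        N (z t) ^ 2 + dualNorm N (deriv z t) ^ 2 ≤
        N (z t) ^ 2 + (1/c₁) ^ 2 * ‖deriv z t‖ ^ 2 := by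
      intro t _
      have hle := aux_dual_le N hc₁ hlb (deriv z t)
      have hnn := aux_dual_nonneg N hc₁ hlb (deriv z t)
      have : dualNorm N (deriv z t) ^ 2 ≤ (1/c₁ * ‖deriv z t‖) ^ 2 :=
        pow_le_pow_left₀ hnn hle 2
      nlinarith
    have hintrhs2 : IntervalIntegrable
        (fun t => N (z t) ^ 2 + (1/c₁) ^ 2 * ‖deriv z t‖ ^ 2) MeasureTheory.volume 0 T :=
      (hcg2.add (continuous_const.mul hcg1)).intervalIntegrable 0 T
    have := intervalIntegral.integral_mono_on hT.le (hint2.add hintd) hintrhs2 hpt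
    rw [intervalIntegral.integral_add hint2 hintd,
      intervalIntegral.integral_add hint2 (hint1.const_mul _),
      intervalIntegral.integral_const_mul] at this
    have hb1 : (1/c₁) ^ 2 ≤ C1 := by
      rw [hC1def]
      refine le_trans (le_of_eq ?_) (le_max_left _ _)
      rw [div_pow, one_pow]
    have hb2 : (1:ℝ) ≤ C1 := le_max_right _ _
    have m1 : (1/c₁) ^ 2 * I1 ≤ C1 * I1 := mul_le_mul_of_nonneg_right hb1 hI1nonneg
    have m2 : (1:ℝ) * I2 ≤ C1 * I2 := mul_le_mul_of_nonneg_right hb2 hI2nonneg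
    have m3 : (1:ℝ) * K ≤ C1 * K := mul_le_mul_of_nonneg_right hb2 hKnonneg
    have hSexp : C1 * S = C1 * I1 + C1 * I2 + C1 * K := by rw [hSdef]; ring
    rw [hSexp, intervalIntegral.integral_add hint2 hintd]
    linarith
  -- upper bound on normY²
  have hyE : ‖(δ • z 0 : E)‖ ^ 2 = δ ^ 2 * K := by
    rw [norm_smul, Real.norm_eq_abs, abs_of_pos hδ, mul_pow, hKdef]
  have hA2 : (∫ t in (0:ℝ)..T, N (y t) ^ 2) + ‖(δ • z 0 : E)‖ ^ 2 ≤ C2 * S := by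
    have hpt : ∀ t ∈ Set.Icc (0:ℝ) T,
        N (y t) ^ 2 ≤ 2 * c₂ ^ 2 * ‖deriv z t‖ ^ 2 + 2 * δ ^ 2 * N (z t) ^ 2 := by
      intro t _
      have t1 : N (y t) ≤ N (deriv z t) + δ * N (z t) := by
        refine (hNtri _ _).trans ?_
        rw [hNsmul, abs_of_pos hδ]
      have t2 : N (y t) ≤ c₂ * ‖deriv z t‖ + δ * N (z t) := by
        have := hub (deriv z t); linarith
      have t3 : N (y t) ^ 2 ≤ (c₂ * ‖deriv z t‖ + δ * N (z t)) ^ 2 :=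
        pow_le_pow_left₀ (hNnonneg _) t2 2
      nlinarith [sq_nonneg (c₂ * ‖deriv z t‖ - δ * N (z t))]
    have hintrhs3 : IntervalIntegrable
        (fun t => 2 * c₂ ^ 2 * ‖deriv z t‖ ^ 2 + 2 * δ ^ 2 * N (z t) ^ 2)
        MeasureTheory.volume 0 T :=
      ((continuous_const.mul hcg1).add (continuous_const.mul hcg2)).intervalIntegrable 0 T
    have := intervalIntegral.integral_mono_on hT.le hinty hintrhs3 hpt
    rw [intervalIntegral.integral_add (hint1.const_mul _) (hint2.const_mul _),
      intervalIntegral.integral_const_mul, intervalIntegral.integral_const_mul] at this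
    have hb1 : 2 * c₂ ^ 2 ≤ C2 := le_max_left _ _
    have hb2 : 2 * δ ^ 2 ≤ C2 := le_max_right _ _
    have hb3 : δ ^ 2 ≤ C2 := le_trans (by nlinarith [sq_nonneg δ]) hb2
    have m1 : 2 * c₂ ^ 2 * I1 ≤ C2 * I1 := mul_le_mul_of_nonneg_right hb1 hI1nonneg
    have m2 : 2 * δ ^ 2 * I2 ≤ C2 * I2 := mul_le_mul_of_nonneg_right hb2 hI2nonneg
    have m3 : δ ^ 2 * K ≤ C2 * K := mul_le_mul_of_nonneg_right hb3 hKnonneg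
    have hSexp : C2 * S = C2 * I1 + C2 * I2 + C2 * K := by rw [hSdef]; ring
    rw [hyE, hSexp]
    linarith
  -- positivity of the Y-norm
  have hIynonneg : 0 ≤ ∫ t in (0:ℝ)..T, N (y t) ^ 2 :=
    intervalIntegral.integral_nonneg hT.le fun u _ => sq_nonneg _
  have hA2pos : 0 < (∫ t in (0:ℝ)..T, N (y t) ^ 2) + ‖(δ • z 0 : E)‖ ^ 2 := by
    by_cases hy0 : ∃ t1 ∈ Set.Icc (0:ℝ) T, y t1 ≠ 0
    · obtain ⟨t1, ht1, hyt1⟩ := hy0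
      have hpos : 0 < N (y t1) ^ 2 := by
        have : 0 < N (y t1) := lt_of_le_of_ne (hNnonneg _) fun h => hyt1 ((hN0 _).mp h.symm)
        positivity
      have := aux_int_pos hT hcgy.continuousOn (fun u _ => sq_nonneg _) ht1 hpos
      nlinarith [sq_nonneg ‖(δ • z 0 : E)‖]
    · push_neg at hy0
      by_cases hz0 : z 0 = 0
      · exfalso
        have hanti : AntitoneOn (fun s => ⟪z s, z s⟫) (Set.Icc (0:ℝ) T) := by
          apply antitoneOn_of_deriv_nonpos (convex_Icc 0 T) (hzc.inner hzc).continuousOn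
          · intro x hx
            exact ((hdiff x).inner ℝ (hdiff x)).differentiableAt.differentiableWithinAt
          · intro x hx
            rw [interior_Icc] at hx
            have hx' : x ∈ Set.Icc (0:ℝ) T := ⟨hx.1.le, hx.2.le⟩
            have hyx : deriv z x = -(δ • z x) := by
              have h := hy0 x hx'
              rw [hydef] at h
              exact eq_neg_of_add_eq_zero_left h
            rw [((hdiff x).inner ℝ (hdiff x)).deriv, hyx]
            rw [inner_neg_right, inner_neg_left, real_inner_smul_left, real_inner_smul_right]
            nlinarith [(real_inner_self_nonneg : (0:ℝ) ≤ ⟪z x, z x⟫), hδ]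
        have h1 : (fun s => ⟪z s, z s⟫) t₀ ≤ (fun s => ⟪z s, z s⟫) 0 :=
          hanti (Set.left_mem_Icc.mpr hT.le) ht₀ ht₀.1
        have h2 : ⟪z 0, z 0⟫ = (0:ℝ) := by rw [hz0]; simp
        have h3 : (0:ℝ) < ⟪z t₀, z t₀⟫ := by
          rw [real_inner_self_eq_norm_sq]
          exact pow_pos (norm_pos_iff.mpr hzt₀) 2
        simp only at h1
        rw [h2] at h1
        linarith
      · have hne : (δ • z 0 : E) ≠ 0 := smul_ne_zero hδ.ne' hz0
        have : 0 < ‖(δ • z 0 : E)‖ ^ 2 := pow_pos (norm_pos_iff.mpr hne) 2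
        linarith
  refine ⟨y, hyc.continuousOn, δ • z 0, ?_, ?_⟩
  · rw [normY]
    exact Real.sqrt_pos.mpr hA2pos
  · have hXle : normX N T z ≤ Real.sqrt (C1 * S) := by
      rw [normX]
      exact Real.sqrt_le_sqrt hA1
    have hYle : normY N T y (δ • z 0) ≤ Real.sqrt (C2 * S) := by
      rw [normY]
      exact Real.sqrt_le_sqrt hA2
    have hprodeq : Real.sqrt (C1 * S) * Real.sqrt (C2 * S) = Real.sqrt (C1 * C2) * S := by
      rw [← Real.sqrt_mul (by positivity)]
      rw [show C1 * S * (C2 * S) = (C1 * C2) * S ^ 2 by ring]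
      rw [Real.sqrt_mul (by positivity), Real.sqrt_sq hS.le]
    have hXnn : 0 ≤ normX N T z := Real.sqrt_nonneg _
    have hYnn : 0 ≤ normY N T y (δ • z 0) := Real.sqrt_nonneg _
    have hprod : normX N T z * normY N T y (δ • z 0) ≤ Real.sqrt (C1 * C2) * S := by
      rw [← hprodeq]
      exact mul_le_mul hXle hYle hYnn (Real.sqrt_nonneg _)
    have hfinal : c / Real.sqrt (C1 * C2) * (Real.sqrt (C1 * C2) * S) = c * S := by
      field_simp
    calc c / Real.sqrt (C1 * C2) * normX N T z * normY N T y (δ • z 0)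
        = c / Real.sqrt (C1 * C2) * (normX N T z * normY N T y (δ • z 0)) := by ring
      _ ≤ c / Real.sqrt (C1 * C2) * (Real.sqrt (C1 * C2) * S) :=
          mul_le_mul_of_nonneg_left hprod (by positivity)
      _ = c * S := hfinal
      _ ≤ Bform a T z y (δ • z 0) := hBlow
end

section
/- If a continuous function y : [0,T] → E and a vector ỹ ∈ E satisfy B(z,(y,ỹ)) = 0 for every continuously differentiable z : [0,T] → E, then y(t) = 0 for all t ∈ [0,T] and ỹ = 0. (This is the implication (8) established in the proof of Theorem 5, which together with the inf-sup condition yields unique solvability of the semidiscrete Nitsche scheme via the Banach–Nečas–Babuška theorem.) -/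
open scoped RealInnerProductSpace
open intervalIntegral Set MeasureTheory


private lemma hasDerivAt_primitive' {h : ℝ → ℝ} (hh : Continuous h) (t : ℝ) :
    HasDerivAt (fun u => ∫ s in (0:ℝ)..u, h s) (h t) t :=
  intervalIntegral.integral_hasDerivAt_right (hh.intervalIntegrable _ _)
    (hh.stronglyMeasurableAtFilter _ _) hh.continuousAt

private lemma weak_ode {T : ℝ} (hT : 0 < T) {g h : ℝ → ℝ} (hg : Continuous g)
    (hh : Continuous h) (c : ℝ)
    (hid : ∀ φ : ℝ → ℝ, ContDiff ℝ 1 φ →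
      (∫ t in (0:ℝ)..T, (deriv φ t * g t + φ t * h t)) + φ 0 * c = 0) :
    (∀ t ∈ Set.Icc (0:ℝ) T, g t = c + ∫ s in (0:ℝ)..t, h s) ∧
      c + (∫ s in (0:ℝ)..T, h s) = 0 := by
  set H : ℝ → ℝ := fun u => ∫ s in (0:ℝ)..u, h s with hHdef
  have hHd : ∀ t, HasDerivAt H (h t) t := fun t => hasDerivAt_primitive' hh t
  have hHc : Continuous H := Differentiable.continuous fun t => (hHd t).differentiableAt
  -- second conclusion, via the constant test function 1
  have key2 : c + (∫ s in (0:ℝ)..T, h s) = 0 := by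
    have := hid (fun _ => 1) contDiff_const
    simpa [add_comm] using this
  refine ⟨?_, key2⟩
  -- f := g - (c + H)
  set f : ℝ → ℝ := fun t => g t - (c + H t) with hfdef
  have hfc : Continuous f := hg.sub (continuous_const.add hHc)
  -- ∫ φ' f = 0 for every C¹ φ
  have hmain : ∀ φ : ℝ → ℝ, ContDiff ℝ 1 φ →
      (∫ t in (0:ℝ)..T, deriv φ t * f t) = 0 := by
    intro φ hφ
    have hφd : Continuous (deriv φ) := hφ.continuous_deriv le_rfl
    have hφc : Continuous φ := hφ.continuous
    have hibp : ∫ t in (0:ℝ)..T, φ t * h t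
        = φ T * (c + H T) - φ 0 * (c + H 0) - ∫ t in (0:ℝ)..T, deriv φ t * (c + H t) := by
      apply intervalIntegral.integral_mul_deriv_eq_deriv_mul_of_hasDerivAt
        hφc.continuousOn (continuous_const.add hHc).continuousOn
        (fun x _ => (hφ.differentiable one_ne_zero x).hasDerivAt)
        (fun x _ => (hHd x).const_add c)
        (hφd.intervalIntegrable _ _) (hh.intervalIntegrable _ _)
    have hH0 : H 0 = 0 := intervalIntegral.integral_same
    have hsplit : (∫ t in (0:ℝ)..T, (deriv φ t * g t + φ t * h t))
        = (∫ t in (0:ℝ)..T, deriv φ t * g t) + ∫ t in (0:ℝ)..T, φ t * h t :=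
      intervalIntegral.integral_add ((hφd.mul hg).intervalIntegrable _ _)
        ((hφc.mul hh).intervalIntegrable _ _)
    have hfsplit : (∫ t in (0:ℝ)..T, deriv φ t * f t)
        = (∫ t in (0:ℝ)..T, deriv φ t * g t)
          - ∫ t in (0:ℝ)..T, deriv φ t * (c + H t) := by
      have hsub := intervalIntegral.integral_sub ((hφd.mul hg).intervalIntegrable (μ := volume) 0 T)
        ((hφd.mul ((continuous_const : Continuous fun _ : ℝ => c).add hHc)).intervalIntegrable (μ := volume) 0 T)
      simp only [Pi.mul_apply, Pi.add_apply] at hsub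
      rw [← hsub]
      simp [hfdef, mul_sub]
    have hHT : c + H T = 0 := key2
    have h1 := hid φ hφ
    rw [hsplit, hibp, hHT, hH0, mul_zero, add_zero] at h1
    rw [hfsplit]
    linarith
  -- take φ the primitive of f
  set Φ : ℝ → ℝ := fun u => ∫ s in (0:ℝ)..u, f s with hΦdef
  have hΦd : ∀ t, HasDerivAt Φ (f t) t := fun t => hasDerivAt_primitive' hfc t
  have hΦderiv : deriv Φ = f := funext fun t => (hΦd t).deriv
  have hΦC1 : ContDiff ℝ 1 Φ := contDiff_one_iff_deriv.2
    ⟨fun t => (hΦd t).differentiableAt, hΦderiv ▸ hfc⟩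
  have hsq : (∫ t in (0:ℝ)..T, f t ^ 2) = 0 := by
    have := hmain Φ hΦC1
    rw [hΦderiv] at this
    simpa [sq] using this
  -- conclude f = 0 on [0, T]
  intro t ht
  by_contra hne
  have hft : f t ≠ 0 := by
    simp only [hfdef]
    intro hc
    exact hne (by linarith [sub_eq_zero.mp hc])
  have hpos : 0 < ∫ s in (0:ℝ)..T, f s ^ 2 := by
    apply intervalIntegral.integral_pos hT (hfc.pow 2).continuousOn
      (fun x _ => sq_nonneg _) ⟨t, ht, lt_of_le_of_ne (sq_nonneg _) (Ne.symm (pow_ne_zero 2 hft))⟩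
  rw [hsq] at hpos; exact lt_irrefl 0 hpos


/-- Implication (8) in the proof of Theorem 5: if a continuous `y : [0,T] → E` and `ỹ ∈ E`
satisfy `B(z,(y,ỹ)) = 0` for every continuously differentiable `z : [0,T] → E`, then `y ≡ 0`
on `[0,T]` and `ỹ = 0`. -/
theorem Bform_nondegenerate
    {E : Type*} [NormedAddCommGroup E] [InnerProductSpace ℝ E]
    [FiniteDimensional ℝ E] [Nontrivial E]
    (N : E → ℝ)
    (hN0 : ∀ x, N x = 0 ↔ x = 0)
    (hNsmul : ∀ (c : ℝ) (x : E), N (c • x) = |c| * N x)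
    (hNtri : ∀ x y : E, N (x + y) ≤ N x + N y)
    (T : ℝ) (hT : 0 < T)
    (a : ℝ → E →ₗ[ℝ] E →ₗ[ℝ] ℝ)
    (ha_cont : ∀ w v : E, ContinuousOn (fun t => a t w v) (Set.Icc 0 T))
    (αh Mh : ℝ) (hα : 0 < αh) (hM : 0 < Mh)
    (hcoer : ∀ t ∈ Set.Icc (0:ℝ) T, ∀ v : E, αh * N v ^ 2 ≤ a t v v)
    (hcont : ∀ t ∈ Set.Icc (0:ℝ) T, ∀ w v : E, a t w v ≤ Mh * N w * N v)
    (y : ℝ → E) (hy : ContinuousOn y (Set.Icc 0 T)) (yE : E)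
    (hB : ∀ z : ℝ → E, ContDiff ℝ 1 z → Bform a T z y yE = 0) :
    (∀ t ∈ Set.Icc (0:ℝ) T, y t = 0) ∧ yE = 0 := by
  classical
  -- clamp to [0, T]
  set π : ℝ → ℝ := fun t => max 0 (min t T) with hπdef
  have hπmem : ∀ t, π t ∈ Set.Icc (0:ℝ) T := fun t =>
    ⟨le_max_left _ _, max_le hT.le (min_le_right _ _)⟩
  have hπcont : Continuous π := continuous_const.max (continuous_id.min continuous_const)
  have hπid : ∀ t ∈ Set.Icc (0:ℝ) T, π t = t := by
    intro t ht
    simp only [hπdef]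
    rw [min_eq_left ht.2, max_eq_right ht.1]
  set yc : ℝ → E := fun t => y (π t) with hycdef
  have hycc : Continuous yc := hy.comp_continuous hπcont hπmem
  set b := stdOrthonormalBasis ℝ E with hbdef
  set g : Fin (Module.finrank ℝ E) → ℝ → ℝ := fun i s => ⟪b i, yc s⟫ with hgdef
  have hgc : ∀ i, Continuous (g i) := fun i => continuous_const.inner hycc
  set h : Fin (Module.finrank ℝ E) → ℝ → ℝ := fun i s => a (π s) (b i) (yc s) with hhdef
  have hexp : ∀ (t : ℝ) (w v : E), a t w v = ∑ j, ⟪b j, v⟫ * a t w (b j) := by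
    intro t w v
    conv_lhs => rw [← b.sum_repr' v]
    rw [map_sum]
    simp [real_inner_smul_left]
  have hexp1 : ∀ (t : ℝ) (w v : E), a t w v = ∑ j, ⟪b j, w⟫ * a t (b j) v := by
    intro t w v
    conv_lhs => rw [← b.sum_repr' w]
    rw [map_sum, LinearMap.sum_apply]
    refine Finset.sum_congr rfl fun j _ => ?_
    rw [_root_.map_smul, LinearMap.smul_apply, smul_eq_mul]
  have hhc : ∀ i, Continuous (h i) := by
    intro i
    have : h i = fun s => ∑ j, ⟪b j, yc s⟫ * a (π s) (b i) (b j) := by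
      funext s; exact hexp (π s) (b i) (yc s)
    rw [this]
    exact continuous_finset_sum _ fun j _ =>
      (continuous_const.inner hycc).mul ((ha_cont (b i) (b j)).comp_continuous hπcont hπmem)
  -- the weak identity for z = φ • b i
  have hid : ∀ i, ∀ φ : ℝ → ℝ, ContDiff ℝ 1 φ →
      (∫ t in (0:ℝ)..T, (deriv φ t * g i t + φ t * h i t)) + φ 0 * ⟪b i, yE⟫ = 0 := by
    intro i φ hφ
    set z : ℝ → E := fun t => φ t • b i with hzdef
    have hzC1 : ContDiff ℝ 1 z := hφ.smul contDiff_const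
    have hzderiv : ∀ t, deriv z t = deriv φ t • b i := fun t =>
      (((hφ.differentiable one_ne_zero) t).hasDerivAt.smul_const (b i)).deriv
    have hBz := hB z hzC1
    rw [Bform] at hBz
    have hcong : (∫ t in (0:ℝ)..T, (⟪deriv z t, y t⟫ + a t (z t) (y t)))
        = ∫ t in (0:ℝ)..T, (deriv φ t * g i t + φ t * h i t) := by
      apply intervalIntegral.integral_congr
      intro t ht
      rw [Set.uIcc_of_le hT.le] at ht
      have hπt : π t = t := hπid t ht
      simp only [hzdef, hgdef, hhdef, hycdef, hπt, hzderiv t]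
      rw [show deriv (fun t => φ t • b i) t = deriv φ t • b i from hzderiv t]
      rw [real_inner_smul_left, _root_.map_smul, LinearMap.smul_apply, smul_eq_mul]
    rw [hcong] at hBz
    rw [hzdef] at hBz
    simp only [real_inner_smul_left] at hBz
    exact hBz
  -- apply the scalar weak ODE lemma for each basis direction
  have hode : ∀ i, (∀ t ∈ Set.Icc (0:ℝ) T, g i t = ⟪b i, yE⟫ + ∫ s in (0:ℝ)..t, h i s) ∧
      ⟪b i, yE⟫ + (∫ s in (0:ℝ)..T, h i s) = 0 := fun i =>
    weak_ode hT (hgc i) (hhc i) _ (hid i)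
  -- the energy function
  set F : Fin (Module.finrank ℝ E) → ℝ → ℝ :=
    fun i t => ⟪b i, yE⟫ + ∫ s in (0:ℝ)..t, h i s with hFdef
  have hFy : ∀ t ∈ Set.Icc (0:ℝ) T, ∀ i, F i t = ⟪b i, y t⟫ := by
    intro t ht i
    have := ((hode i).1 t ht).symm
    simpa [hgdef, hycdef, hπid t ht] using this
  have hFT : ∀ i, F i T = 0 := fun i => (hode i).2
  have hFd : ∀ i t, HasDerivAt (F i) (h i t) t := fun i t =>
    (hasDerivAt_primitive' (hhc i) t).const_add _
  set q : ℝ → ℝ := fun t => ∑ i, (F i t) ^ 2 with hqdef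
  have hqd : ∀ t, HasDerivAt q (∑ i, 2 * F i t * h i t) t := by
    intro t
    have : HasDerivAt q (∑ i, (2 : ℕ) * F i t ^ (2 - 1) * h i t) t :=
      HasDerivAt.fun_sum fun i _ => (hFd i t).pow 2
    simpa using this
  have hqderiv : ∀ t, deriv q t = ∑ i, 2 * F i t * h i t := fun t => (hqd t).deriv
  -- deriv q is nonneg on [0, T]
  have hqnonneg : ∀ t ∈ Set.Icc (0:ℝ) T, 0 ≤ deriv q t := by
    intro t ht
    rw [hqderiv t]
    have hrw : ∑ i, 2 * F i t * h i t = 2 * a t (y t) (y t) := by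
      have : ∀ i, F i t = ⟪b i, y t⟫ := hFy t ht
      calc ∑ i, 2 * F i t * h i t = 2 * ∑ i, ⟪b i, y t⟫ * a t (b i) (y t) := by
            rw [Finset.mul_sum]
            refine Finset.sum_congr rfl fun i _ => ?_
            rw [this i]
            simp only [hhdef, hycdef, hπid t ht]
            ring
        _ = 2 * a t (y t) (y t) := by
            congr 1
            exact (hexp1 t (y t) (y t)).symm
    rw [hrw]
    have h1 := hcoer t ht (y t)
    have h2 : (0:ℝ) ≤ αh * N (y t) ^ 2 := mul_nonneg hα.le (sq_nonneg _)
    linarith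
  -- q is monotone on [0, T]
  have hqmono : MonotoneOn q (Set.Icc 0 T) := by
    apply monotoneOn_of_deriv_nonneg (convex_Icc 0 T)
      (Continuous.continuousOn (Differentiable.continuous fun t => (hqd t).differentiableAt))
      (fun t _ => ((hqd t).differentiableAt).differentiableWithinAt)
      (fun t ht => hqnonneg t (interior_subset ht))
  have hqT : q T = 0 := by
    simp only [hqdef]
    exact Finset.sum_eq_zero fun i _ => by rw [hFT i]; ring
  have hq0 : ∀ t ∈ Set.Icc (0:ℝ) T, q t = 0 := by
    intro t ht
    have h1 : q t ≤ q T := hqmono ht (Set.right_mem_Icc.2 hT.le) ht.2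
    have h2 : 0 ≤ q t := Finset.sum_nonneg fun i _ => sq_nonneg _
    linarith [hqT ▸ h1]
  have hF0 : ∀ t ∈ Set.Icc (0:ℝ) T, ∀ i, F i t = 0 := by
    intro t ht i
    have := hq0 t ht
    rw [hqdef] at this
    have := (Finset.sum_eq_zero_iff_of_nonneg fun j _ => sq_nonneg (F j t)).1 this i
      (Finset.mem_univ i)
    exact pow_eq_zero_iff (two_ne_zero) |>.1 this
  have hy0 : ∀ t ∈ Set.Icc (0:ℝ) T, y t = 0 := by
    intro t ht
    have : y t = ∑ i, ⟪b i, y t⟫ • b i := (b.sum_repr' (y t)).symm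
    rw [this]
    refine Finset.sum_eq_zero fun i _ => ?_
    rw [← hFy t ht i, hF0 t ht i, zero_smul]
  refine ⟨hy0, ?_⟩
  have h0mem : (0:ℝ) ∈ Set.Icc (0:ℝ) T := Set.left_mem_Icc.2 hT.le
  have : yE = ∑ i, ⟪b i, yE⟫ • b i := (b.sum_repr' yE).symm
  rw [this]
  refine Finset.sum_eq_zero fun i _ => ?_
  have hc0 : ⟪b i, yE⟫ = F i 0 := by simp [hFdef]
  rw [hc0, hF0 0 h0mem i]
  exact zero_smul ℝ _
end

section
/- Under the backward Euler error relation, one has ‖ρ_n‖ ≤ √(T/(8α̂)) · τ · W for every n = 0, …, M. (This is the first estimate of Lemma 7.2, bounding the maximal discrete error between the backward Euler solution and the semidiscrete Nitsche solution.) -/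
open scoped RealInnerProductSpace

/-- Lemma 7.2, first estimate: under the backward Euler error relation, the discrete errors
satisfy `‖ρ_n‖ ≤ √(T/(8α̂)) τ W` for all `n = 0, …, M`. -/
theorem backwardEuler_error_max_estimate
    {E : Type*} [NormedAddCommGroup E] [InnerProductSpace ℝ E] [FiniteDimensional ℝ E]
    (N : E → ℝ) (hN : ∀ v : E, ‖v‖ ≤ N v)
    (τ : ℝ) (hτ : 0 < τ) (M : ℕ) (hM : 0 < M) (T : ℝ) (hT : T = M * τ)
    (a : ℕ → E →ₗ[ℝ] E →ₗ[ℝ] ℝ) (αh : ℝ) (hα : 0 < αh)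
    (hcoer : ∀ n < M, ∀ v : E, αh * N v ^ 2 ≤ a n v v)
    (W : ℝ) (hW : 0 ≤ W)
    (ρ : ℕ → E) (hρ0 : ρ 0 = 0)
    (w : ℕ → E) (hw : ∀ n < M, ‖w n‖ ≤ W)
    (hrel : ∀ n < M,
      ⟪ρ (n + 1) - ρ n, ρ (n + 1)⟫ - τ ^ 2 / 2 * ⟪w n, ρ (n + 1)⟫
        + τ * a n (ρ (n + 1)) (ρ (n + 1)) = 0) :
    ∀ n ≤ M, ‖ρ n‖ ≤ Real.sqrt (T / (8 * αh)) * τ * W := by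
  -- one-step estimate
  have key : ∀ n < M, ‖ρ (n + 1)‖ ^ 2 ≤ ‖ρ n‖ ^ 2 + τ ^ 3 * W ^ 2 / (8 * αh) := by
    intro n hn
    have hrel' := hrel n hn
    have hco := hcoer n hn (ρ (n + 1))
    have hNv := hN (ρ (n + 1))
    have hNn : (0:ℝ) ≤ N (ρ (n + 1)) := le_trans (norm_nonneg _) hNv
    have h1 : ⟪ρ (n + 1) - ρ n, ρ (n + 1)⟫ = ‖ρ (n + 1)‖ ^ 2 - ⟪ρ n, ρ (n + 1)⟫ := by
      rw [inner_sub_left, real_inner_self_eq_norm_sq]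
    have h2 : ⟪ρ n, ρ (n + 1)⟫ ≤ (‖ρ n‖ ^ 2 + ‖ρ (n + 1)‖ ^ 2) / 2 := by
      have := real_inner_le_norm (ρ n) (ρ (n + 1))
      nlinarith [sq_nonneg (‖ρ n‖ - ‖ρ (n + 1)‖)]
    have h3 : ⟪w n, ρ (n + 1)⟫ ≤ W * N (ρ (n + 1)) := by
      have := real_inner_le_norm (w n) (ρ (n + 1))
      have hwn := hw n hn
      nlinarith [norm_nonneg (ρ (n + 1)), norm_nonneg (w n)]
    set x := N (ρ (n + 1)) with hx
    have step : ‖ρ (n + 1)‖ ^ 2 - ‖ρ n‖ ^ 2 ≤ τ ^ 2 * W * x - 2 * τ * αh * x ^ 2 := by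
      have t1 : τ ^ 2 / 2 * ⟪w n, ρ (n + 1)⟫ ≤ τ ^ 2 / 2 * (W * x) :=
        mul_le_mul_of_nonneg_left h3 (by positivity)
      have t2 : τ * (αh * x ^ 2) ≤ τ * (((a n) (ρ (n + 1))) (ρ (n + 1))) :=
        mul_le_mul_of_nonneg_left hco hτ.le
      nlinarith [hrel', h1, h2]
    rw [← sub_le_iff_le_add', le_div_iff₀ (by positivity : (0:ℝ) < 8 * αh)]
    nlinarith [mul_nonneg hτ.le (sq_nonneg (4 * αh * x - τ * W)),
      mul_le_mul_of_nonneg_right step (by positivity : (0:ℝ) ≤ 8 * αh)]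
  have hC : (0:ℝ) ≤ τ ^ 3 * W ^ 2 / (8 * αh) :=
    div_nonneg (mul_nonneg (by positivity) (sq_nonneg _)) (by linarith)
  have hsq : ∀ n ≤ M, ‖ρ n‖ ^ 2 ≤ n * (τ ^ 3 * W ^ 2 / (8 * αh)) := by
    intro n hn
    induction n with
    | zero => simp [hρ0]
    | succ k ih =>
      have hk : k < M := lt_of_lt_of_le (Nat.lt_succ_self k) hn
      have := key k hk
      have ihk := ih (le_of_lt hk)
      push_cast
      nlinarith
  intro n hn
  have h := hsq n hn
  have hbound : ‖ρ n‖ ^ 2 ≤ T / (8 * αh) * τ ^ 2 * W ^ 2 := by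
    have hnM : (n:ℝ) ≤ M := by exact_mod_cast hn
    have : (n:ℝ) * (τ ^ 3 * W ^ 2 / (8 * αh)) ≤ (M:ℝ) * (τ ^ 3 * W ^ 2 / (8 * αh)) :=
      mul_le_mul_of_nonneg_right hnM hC
    rw [hT]
    calc ‖ρ n‖ ^ 2 ≤ (M:ℝ) * (τ ^ 3 * W ^ 2 / (8 * αh)) := le_trans h this
      _ = (M:ℝ) * τ / (8 * αh) * τ ^ 2 * W ^ 2 := by field_simp
  have hrhs : Real.sqrt (T / (8 * αh)) * τ * W ≥ 0 := by positivity
  have hsq2 : (Real.sqrt (T / (8 * αh)) * τ * W) ^ 2 = T / (8 * αh) * τ ^ 2 * W ^ 2 := by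
    have hTpos : (0:ℝ) ≤ T / (8 * αh) := by
      rw [hT]; positivity
    rw [mul_pow, mul_pow, Real.sq_sqrt hTpos]
  have h5 : ‖ρ n‖ ≤ Real.sqrt ((Real.sqrt (T / (8 * αh)) * τ * W) ^ 2) := by
    rw [← Real.sqrt_sq (norm_nonneg (ρ n))]
    exact Real.sqrt_le_sqrt (by rw [hsq2]; exact hbound)
  rwa [Real.sqrt_sq hrhs] at h5
end

section
/- Under the backward Euler error relation, one has (Σ_{n=0}^{M−1} τ N(ρ_{n+1})²)^{1/2} ≤ (√T/(2α̂)) · τ · W. (This is the second estimate of Lemma 7.2, bounding the discrete L²(J;V_h)-norm of the error between the backward Euler solution and the semidiscrete Nitsche solution.) -/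
open scoped RealInnerProductSpace

/-- Lemma 7.2, second estimate: under the backward Euler error relation, the discrete
`L²(J;V_h)`-norm of the error satisfies `(Σ_{n<M} τ N(ρ_{n+1})²)^{1/2} ≤ (√T/(2α̂)) τ W`. -/
theorem backwardEuler_error_L2_estimate
    {E : Type*} [NormedAddCommGroup E] [InnerProductSpace ℝ E] [FiniteDimensional ℝ E]
    (N : E → ℝ) (hN : ∀ v : E, ‖v‖ ≤ N v)
    (τ : ℝ) (hτ : 0 < τ) (M : ℕ) (hM : 0 < M) (T : ℝ) (hT : T = M * τ)
    (a : ℕ → E →ₗ[ℝ] E →ₗ[ℝ] ℝ) (αh : ℝ) (hα : 0 < αh)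
    (hcoer : ∀ n < M, ∀ v : E, αh * N v ^ 2 ≤ a n v v)
    (W : ℝ) (hW : 0 ≤ W)
    (ρ : ℕ → E) (hρ0 : ρ 0 = 0)
    (w : ℕ → E) (hw : ∀ n < M, ‖w n‖ ≤ W)
    (hrel : ∀ n < M,
      ⟪ρ (n + 1) - ρ n, ρ (n + 1)⟫ - τ ^ 2 / 2 * ⟪w n, ρ (n + 1)⟫
        + τ * a n (ρ (n + 1)) (ρ (n + 1)) = 0) :
    Real.sqrt (∑ n ∈ Finset.range M, τ * N (ρ (n + 1)) ^ 2)
      ≤ Real.sqrt T / (2 * αh) * τ * W := by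
  set S : ℝ := ∑ n ∈ Finset.range M, τ * N (ρ (n + 1)) ^ 2 with hS
  have hNnonneg : ∀ v : E, 0 ≤ N v := fun v => le_trans (norm_nonneg v) (hN v)
  have hSnonneg : 0 ≤ S := Finset.sum_nonneg fun n _ => by positivity
  -- per-step inequality
  have key : ∀ n ∈ Finset.range M,
      τ * (αh * N (ρ (n + 1)) ^ 2) + (‖ρ (n + 1)‖ ^ 2 - ‖ρ n‖ ^ 2) / 2
        ≤ τ ^ 2 / 2 * (W * N (ρ (n + 1))) := by
    intro n hn
    rw [Finset.mem_range] at hn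
    have h1 := hrel n hn
    have h2 : αh * N (ρ (n + 1)) ^ 2 ≤ a n (ρ (n + 1)) (ρ (n + 1)) := hcoer n hn _
    have h3 : ⟪w n, ρ (n + 1)⟫ ≤ W * N (ρ (n + 1)) := by
      calc ⟪w n, ρ (n + 1)⟫ ≤ ‖w n‖ * ‖ρ (n + 1)‖ := real_inner_le_norm _ _
        _ ≤ W * N (ρ (n + 1)) :=
          mul_le_mul (hw n hn) (hN _) (norm_nonneg _) hW
    have h4 : (‖ρ (n + 1)‖ ^ 2 - ‖ρ n‖ ^ 2) / 2 ≤ ⟪ρ (n + 1) - ρ n, ρ (n + 1)⟫ := by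
      rw [inner_sub_left]
      have := real_inner_le_norm (ρ n) (ρ (n + 1))
      have hsq : ‖ρ n‖ * ‖ρ (n + 1)‖ ≤ (‖ρ n‖ ^ 2 + ‖ρ (n + 1)‖ ^ 2) / 2 := by
        nlinarith [sq_nonneg (‖ρ n‖ - ‖ρ (n + 1)‖)]
      have hself : ⟪ρ (n + 1), ρ (n + 1)⟫ = ‖ρ (n + 1)‖ ^ 2 := real_inner_self_eq_norm_sq _
      nlinarith
    nlinarith [mul_le_mul_of_nonneg_left h2 hτ.le]
  -- sum over n
  have hsum := Finset.sum_le_sum key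
  rw [Finset.sum_add_distrib] at hsum
  have htel : ∑ n ∈ Finset.range M, (‖ρ (n + 1)‖ ^ 2 - ‖ρ n‖ ^ 2) / 2
      = (‖ρ M‖ ^ 2 - ‖ρ 0‖ ^ 2) / 2 := by
    rw [← Finset.sum_div, Finset.sum_range_sub (fun n => ‖ρ n‖ ^ 2)]
  have hρ0' : ‖ρ 0‖ = 0 := by rw [hρ0, norm_zero]
  have hmain : αh * S ≤ τ ^ 2 / 2 * W * ∑ n ∈ Finset.range M, N (ρ (n + 1)) := by
    have hL : αh * S = ∑ n ∈ Finset.range M, τ * (αh * N (ρ (n + 1)) ^ 2) := by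
      rw [hS, Finset.mul_sum]; congr 1; ext n; ring
    have hR : ∑ n ∈ Finset.range M, τ ^ 2 / 2 * (W * N (ρ (n + 1)))
        = τ ^ 2 / 2 * W * ∑ n ∈ Finset.range M, N (ρ (n + 1)) := by
      rw [Finset.mul_sum]; congr 1; ext n; ring
    have hρ0'' : ‖ρ 0‖ ^ 2 = 0 := by rw [hρ0']; ring
    rw [hL, ← hR]
    linarith [hsum, htel, sq_nonneg ‖ρ M‖]
  -- Cauchy–Schwarz: (Σ N)² ≤ M Σ N²
  have hCS : (∑ n ∈ Finset.range M, N (ρ (n + 1))) ^ 2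
      ≤ (M : ℝ) * ∑ n ∈ Finset.range M, N (ρ (n + 1)) ^ 2 := by
    have := sq_sum_le_card_mul_sum_sq (s := Finset.range M) (f := fun n => N (ρ (n + 1)))
    simpa using this
  have hsum2 : ∑ n ∈ Finset.range M, N (ρ (n + 1)) ^ 2 = S / τ := by
    rw [hS, Finset.sum_div]; congr 1; ext n; field_simp
  have hSumNonneg : 0 ≤ ∑ n ∈ Finset.range M, N (ρ (n + 1)) :=
    Finset.sum_nonneg fun n _ => hNnonneg _
  have hTnonneg : 0 ≤ T := by rw [hT]; positivity
  have hTs : Real.sqrt T ^ 2 = T := Real.sq_sqrt hTnonneg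
  have hSs : Real.sqrt S ^ 2 = S := Real.sq_sqrt hSnonneg
  have hCS' : ∑ n ∈ Finset.range M, N (ρ (n + 1)) ≤ Real.sqrt T / τ * Real.sqrt S := by
    have h1 : ∑ n ∈ Finset.range M, N (ρ (n + 1)) ≤ Real.sqrt ((M : ℝ) * (S / τ)) := by
      rw [← Real.sqrt_sq hSumNonneg]
      exact Real.sqrt_le_sqrt (by rw [hsum2] at hCS; exact hCS)
    have h2 : (M : ℝ) * (S / τ) = (Real.sqrt T / τ * Real.sqrt S) ^ 2 := by
      have : (Real.sqrt T / τ * Real.sqrt S) ^ 2 = T / τ ^ 2 * S := by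
        rw [mul_pow, div_pow, hTs, hSs]
      rw [this, hT]; field_simp
    rw [h2, Real.sqrt_sq (by positivity)] at h1
    exact h1
  -- combine
  set x := Real.sqrt S with hx
  have hxnn : 0 ≤ x := Real.sqrt_nonneg _
  have hfinal : αh * (x * x) ≤ τ * W * Real.sqrt T / 2 * x := by
    have hxx : x * x = S := by rw [hx, ← sq]; exact hSs
    rw [hxx]
    calc αh * S ≤ τ ^ 2 / 2 * W * (Real.sqrt T / τ * Real.sqrt S) := by
          calc αh * S ≤ τ ^ 2 / 2 * W * ∑ n ∈ Finset.range M, N (ρ (n + 1)) := hmain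
            _ ≤ τ ^ 2 / 2 * W * (Real.sqrt T / τ * Real.sqrt S) := by
              apply mul_le_mul_of_nonneg_left hCS' (by positivity)
      _ = τ * W * Real.sqrt T / 2 * x := by rw [hx]; field_simp
  rcases eq_or_lt_of_le hxnn with h0 | h0
  · rw [← h0]; positivity
  · rw [div_mul_eq_mul_div, div_mul_eq_mul_div, le_div_iff₀ (by positivity)]
    nlinarith [hfinal, Real.sqrt_nonneg T]
end
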